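/- Under the assumptions: (i) each f_i has L_i-Lipschitz gradient with L_max = max_i L_i; (ii) f := max_i f_i is bounded below by F_min along the iterates; (iii) |μ_{D_k} − μ_k| ≤ C₁·μ_{D_k} for all k; for ε ∈ (0,1), the first iteration index k_ε with μ_{k_ε+1} ≤ ε of the min-max direct-search algorithm satisfies k_ε ≤ (2/(cα_0²))(f(x_0) − F_min) + (Ω(L_max + c)²(C₁+1)²/(4β₁²))·ε^{−2}, where Ω = (γ²/(1−β₂²))(γ^{−2}α_0² + (2/c)(f(x_0) − F_min)). -/

import Mathlib

open scoped RealInnerProductSpace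

/-- The multiobjective criticality measure
`μ(x) = - inf_{‖d‖ ≤ 1} max_{i} ⟪∇f_i(x), d⟫`. -/
noncomputable def mu {n m : ℕ} [NeZero m] (f : Fin m → EuclideanSpace ℝ (Fin n) → ℝ)
    (x : EuclideanSpace ℝ (Fin n)) : ℝ :=
  - sInf {y : ℝ | ∃ d : EuclideanSpace ℝ (Fin n), ‖d‖ ≤ 1 ∧
      Finset.univ.sup' Finset.univ_nonempty (fun i => ⟪gradient (f i) x, d⟫) = y}

/-- The approximate criticality measure over a finite set of poll directions. -/
noncomputable def muD {n m : ℕ} [NeZero m] (f : Fin m → EuclideanSpace ℝ (Fin n) → ℝ)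
    (D : Finset (EuclideanSpace ℝ (Fin n))) (hD : D.Nonempty)
    (x : EuclideanSpace ℝ (Fin n)) : ℝ :=
  - D.inf' hD (fun d =>
      Finset.univ.sup' Finset.univ_nonempty (fun i => ⟪gradient (f i) x, d⟫))

/-- The min-max objective `f(x) = max_i f_i(x)`. -/
noncomputable def fmax {n m : ℕ} [NeZero m] (f : Fin m → EuclideanSpace ℝ (Fin n) → ℝ)
    (x : EuclideanSpace ℝ (Fin n)) : ℝ :=
  Finset.univ.sup' Finset.univ_nonempty (fun i => f i x)

lemma descent_lemma {E : Type*} [NormedAddCommGroup E] [InnerProductSpace ℝ E] [CompleteSpace E]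
    (g : E → ℝ) (K : NNReal) (hg : Differentiable ℝ g) (hL : LipschitzWith K (gradient g))
    (x v : E) : g (x + v) ≤ g x + ⟪gradient g x, v⟫ + (K : ℝ) / 2 * ‖v‖ ^ 2 := by
  -- φ t = g (x + t • v)
  have hφd : ∀ t : ℝ, HasDerivAt (fun s : ℝ => g (x + s • v)) ⟪gradient g (x + t • v), v⟫ t := by
    intro t
    have hline : HasDerivAt (fun s : ℝ => x + s • v) v t := by
      simpa using ((hasDerivAt_id t).smul_const v).const_add x
    have hfd : HasFDerivAt g ((InnerProductSpace.toDual ℝ E) (gradient g (x + t • v)))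
        (x + t • v) := by
      rw [← hasGradientAt_iff_hasFDerivAt]; exact (hg _).hasGradientAt
    exact hfd.comp_hasDerivAt t hline
  set h : ℝ → ℝ := fun t => g x + t * ⟪gradient g x, v⟫ + (K : ℝ) / 2 * t ^ 2 * ‖v‖ ^ 2
      - g (x + t • v) with hh
  have hhd : ∀ t : ℝ, HasDerivAt h
      (⟪gradient g x, v⟫ + (K : ℝ) * t * ‖v‖ ^ 2 - ⟪gradient g (x + t • v), v⟫) t := by
    intro t
    have h1 : HasDerivAt (fun t : ℝ => g x + t * ⟪gradient g x, v⟫ + (K:ℝ)/2 * t^2 * ‖v‖^2)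
        (⟪gradient g x, v⟫ + (K : ℝ) * t * ‖v‖ ^ 2) t := by
      have : HasDerivAt (fun t : ℝ => t * ⟪gradient g x, v⟫) ⟪gradient g x, v⟫ t := by
        simpa using (hasDerivAt_id t).mul_const ⟪gradient g x, v⟫
      have h2 : HasDerivAt (fun t : ℝ => (K:ℝ)/2 * t^2 * ‖v‖^2) ((K : ℝ) * t * ‖v‖ ^ 2) t := by
        have := ((hasDerivAt_pow 2 t).const_mul ((K:ℝ)/2)).mul_const (‖v‖^2)
        convert this using 1 <;> try rfl
        ring
      exact (this.const_add (g x)).add h2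
    exact h1.sub (hφd t)
  have key : ∀ t ∈ Set.Icc (0:ℝ) 1, t ∈ Set.Icc (0:ℝ) 1 → True := fun _ _ _ => trivial
  have hmono : MonotoneOn h (Set.Icc (0:ℝ) 1) := by
    apply monotoneOn_of_deriv_nonneg (convex_Icc 0 1)
    · exact Continuous.continuousOn
        (Differentiable.continuous (fun t => (hhd t).differentiableAt))
    · intro t ht
      exact (hhd t).differentiableAt.differentiableWithinAt
    · intro t ht
      rw [(hhd t).deriv]
      have ht0 : 0 ≤ t := (Set.mem_Ioo.mp (by simpa using ht)).1.le
      have hip : ⟪gradient g (x + t • v), v⟫ - ⟪gradient g x, v⟫ ≤ (K : ℝ) * t * ‖v‖ ^ 2 := by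
        have hcs := real_inner_le_norm (gradient g (x + t • v) - gradient g x) v
        rw [inner_sub_left] at hcs
        have hlip : dist (gradient g (x + t • v)) (gradient g x) ≤ (K : ℝ) * (t * ‖v‖) := by
          calc dist (gradient g (x + t • v)) (gradient g x)
              ≤ (K : ℝ) * dist (x + t • v) x := hL.dist_le_mul _ _
            _ = (K : ℝ) * (t * ‖v‖) := by
                congr 1
                simp [dist_eq_norm, norm_smul, abs_of_nonneg ht0]
        rw [dist_eq_norm] at hlip
        calc ⟪gradient g (x + t • v), v⟫ - ⟪gradient g x, v⟫
            ≤ ‖gradient g (x + t • v) - gradient g x‖ * ‖v‖ := hcs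
          _ ≤ ((K : ℝ) * (t * ‖v‖)) * ‖v‖ := mul_le_mul_of_nonneg_right hlip (norm_nonneg v)
          _ = (K : ℝ) * t * ‖v‖ ^ 2 := by ring
      linarith
  have h01 := hmono (Set.left_mem_Icc.mpr zero_le_one) (Set.right_mem_Icc.mpr zero_le_one) zero_le_one
  simp only [hh] at h01
  simp only [zero_smul, add_zero, one_smul, zero_mul, one_mul, mul_zero, mul_one,
    zero_pow, one_pow] at h01
  linarith

set_option maxHeartbeats 1000000 in
theorem stmt13 {n m : ℕ} [NeZero m] (f : Fin m → EuclideanSpace ℝ (Fin n) → ℝ)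
    (L : Fin m → NNReal)
    (hf : ∀ i, ContDiff ℝ 1 (f i))
    (hLip : ∀ i, LipschitzWith (L i) (gradient (f i)))
    (x : ℕ → EuclideanSpace ℝ (Fin n)) (α : ℕ → ℝ)
    (D : ℕ → Finset (EuclideanSpace ℝ (Fin n)))
    (hDne : ∀ k, (D k).Nonempty)
    (hDnorm : ∀ k, ∀ d ∈ D k, ‖d‖ ≤ 1)
    (c γ β₁ β₂ C₁ Fmin ε : ℝ)
    (hβ₁ : 0 < β₁) (hβ₁₂ : β₁ ≤ β₂) (hβ₂ : β₂ < 1) (hγ : 1 ≤ γ) (hc : 0 < c)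
    (hC₁ : 0 < C₁) (hε : 0 < ε) (hε1 : ε < 1) (hα0 : 0 < α 0)
    (hbound : ∀ k, Fmin ≤ fmax f (x k))
    (hstep : ∀ k,
      (∃ d ∈ D k, x (k+1) = x k + α k • d ∧
          fmax f (x (k+1)) < fmax f (x k) - c / 2 * α k ^ 2 ∧
          α k ≤ α (k+1) ∧ α (k+1) ≤ γ * α k) ∨
      ((∀ d ∈ D k, fmax f (x k + α k • d) ≥ fmax f (x k) - c / 2 * α k ^ 2) ∧
          x (k+1) = x k ∧ β₁ * α k ≤ α (k+1) ∧ α (k+1) ≤ β₂ * α k))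
    (hC : ∀ k, |muD f (D k) (hDne k) (x k) - mu f (x k)| ≤
        C₁ * muD f (D k) (hDne k) (x k))
    (kε : ℕ)
    (hfirst : mu f (x (kε + 1)) ≤ ε)
    (hprev : ∀ j < kε, mu f (x (j + 1)) > ε) :
    (kε : ℝ) ≤ 2 / (c * α 0 ^ 2) * (fmax f (x 0) - Fmin) +
      (γ ^ 2 / (1 - β₂ ^ 2) * (γ⁻¹ ^ 2 * α 0 ^ 2 + 2 / c * (fmax f (x 0) - Fmin))) *
        (((Finset.univ.sup' Finset.univ_nonempty L : NNReal) : ℝ) + c) ^ 2 *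
        (C₁ + 1) ^ 2 / (4 * β₁ ^ 2) / ε ^ 2 := by
  classical
  set Lmax : ℝ := ((Finset.univ.sup' Finset.univ_nonempty L : NNReal) : ℝ) with hLmaxdef
  have hLmax0 : (0:ℝ) ≤ Lmax := NNReal.coe_nonneg _
  have hLi : ∀ i : Fin m, (L i : ℝ) ≤ Lmax := fun i =>
    NNReal.coe_le_coe.mpr (Finset.le_sup' L (Finset.mem_univ i))
  have hββ : β₁ ^ 2 ≤ β₂ ^ 2 := by nlinarith [hβ₁, hβ₁₂]
  have hβ₁sq1 : β₁ ^ 2 ≤ 1 := by nlinarith [hβ₁, hβ₁₂, hβ₂]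
  have hγ21 : (0:ℝ) ≤ γ ^ 2 - 1 := by nlinarith [hγ]
  -- positivity of stepsizes
  have hαpos : ∀ k, 0 < α k := by
    intro k
    induction k with
    | zero => exact hα0
    | succ k ih =>
      rcases hstep k with ⟨d, _, _, _, h1, _⟩ | ⟨_, _, h1, _⟩
      · linarith
      · linarith [mul_pos hβ₁ ih]
  -- Succ predicate
  set Succ : ℕ → Prop := fun k => fmax f (x (k+1)) < fmax f (x k) - c / 2 * α k ^ 2 with hSuccdef
  have hUns : ∀ k, ¬ Succ k →
      ((∀ d ∈ D k, fmax f (x k + α k • d) ≥ fmax f (x k) - c / 2 * α k ^ 2) ∧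
        x (k+1) = x k ∧ β₁ * α k ≤ α (k+1) ∧ α (k+1) ≤ β₂ * α k) := by
    intro k hk
    rcases hstep k with ⟨d, _, _, hdec, _, _⟩ | h
    · exact absurd hdec hk
    · exact h
  have hSα : ∀ k, Succ k → α k ≤ α (k+1) ∧ α (k+1) ≤ γ * α k := by
    intro k hk
    rcases hstep k with ⟨d, _, _, _, h1, h2⟩ | ⟨_, hx, _, _⟩
    · exact ⟨h1, h2⟩
    · exfalso
      have hk' : fmax f (x (k+1)) < fmax f (x k) - c / 2 * α k ^ 2 := hk
      rw [hx] at hk'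
      have : 0 < c / 2 * α k ^ 2 := mul_pos (by positivity) (pow_pos (hαpos k) 2)
      linarith
  have hFstep : ∀ k, fmax f (x (k+1)) ≤ fmax f (x k) := by
    intro k
    by_cases h : Succ k
    · have hk' : fmax f (x (k+1)) < fmax f (x k) - c / 2 * α k ^ 2 := h
      have : 0 ≤ c / 2 * α k ^ 2 := by positivity
      linarith
    · rw [(hUns k h).2.1]
  -- sums
  set SS : ℕ → ℝ := fun N => ∑ k ∈ Finset.range N, if Succ k then α k ^ 2 else 0 with hSSdef
  set US : ℕ → ℝ := fun N => ∑ k ∈ Finset.range N, if Succ k then 0 else α k ^ 2 with hUSdef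
  have hI1 : ∀ N, fmax f (x N) + c / 2 * SS N ≤ fmax f (x 0) := by
    intro N
    induction N with
    | zero => simp [hSSdef]
    | succ N ih =>
      have hSSs : SS (N+1) = SS N + (if Succ N then α N ^ 2 else 0) := by
        simp [hSSdef, Finset.sum_range_succ]
      by_cases h : Succ N
      · have h' : fmax f (x (N+1)) < fmax f (x N) - c / 2 * α N ^ 2 := h
        rw [hSSs, if_pos h]
        linarith
      · rw [hSSs, if_neg h, (hUns N h).2.1]
        linarith
  have hI2 : ∀ N, α N ^ 2 + (1 - β₂ ^ 2) * US N ≤ α 0 ^ 2 + (γ ^ 2 - 1) * SS N := by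
    intro N
    induction N with
    | zero => simp [hUSdef, hSSdef]
    | succ N ih =>
      have hSSs : SS (N+1) = SS N + (if Succ N then α N ^ 2 else 0) := by
        simp [hSSdef, Finset.sum_range_succ]
      have hUSs : US (N+1) = US N + (if Succ N then 0 else α N ^ 2) := by
        simp [hUSdef, Finset.sum_range_succ]
      by_cases h : Succ N
      · obtain ⟨h1, h2⟩ := hSα N h
        have hsq : α (N+1) ^ 2 ≤ γ ^ 2 * α N ^ 2 := by
          have h3 := mul_self_le_mul_self (hαpos (N+1)).le h2
          nlinarith [h3]
        rw [hSSs, hUSs, if_pos h, if_pos h]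
        linarith [hsq, ih]
      · obtain ⟨-, -, h1, h2⟩ := hUns N h
        have hsq : α (N+1) ^ 2 ≤ β₂ ^ 2 * α N ^ 2 := by
          have h3 := mul_self_le_mul_self (hαpos (N+1)).le h2
          nlinarith [h3]
        rw [hSSs, hUSs, if_neg h, if_neg h]
        have hstep2 : α (N+1) ^ 2 + (1 - β₂ ^ 2) * (US N + α N ^ 2) ≤
            α N ^ 2 + (1 - β₂ ^ 2) * US N := by linarith [hsq]
        linarith
  -- descent bound at unsuccessful iterations
  have hdesc : ∀ k, ∀ d ∈ D k, fmax f (x k + α k • d) ≤ fmax f (x k) +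
      α k * (Finset.univ.sup' Finset.univ_nonempty (fun i => ⟪gradient (f i) (x k), d⟫)) +
      Lmax / 2 * α k ^ 2 := by
    intro k d hd
    apply Finset.sup'_le
    intro i _
    have h1 := descent_lemma (f i) (L i) ((hf i).differentiable one_ne_zero) (hLip i) (x k) (α k • d)
    have h2 : ⟪gradient (f i) (x k), α k • d⟫ = α k * ⟪gradient (f i) (x k), d⟫ :=
      real_inner_smul_right _ _ _
    have h3 : ‖α k • d‖ ^ 2 ≤ α k ^ 2 := by
      rw [norm_smul, Real.norm_eq_abs, abs_of_pos (hαpos k)]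
      have hdn := hDnorm k d hd
      nlinarith [mul_self_le_mul_self (norm_nonneg d) hdn, sq_nonneg (α k), norm_nonneg d]
    have h4 : f i (x k) ≤ fmax f (x k) := Finset.le_sup' (fun i => f i (x k)) (Finset.mem_univ i)
    have h5 : ⟪gradient (f i) (x k), d⟫ ≤
        Finset.univ.sup' Finset.univ_nonempty (fun j => ⟪gradient (f j) (x k), d⟫) :=
      Finset.le_sup' (fun j => ⟪gradient (f j) (x k), d⟫) (Finset.mem_univ i)
    have h6 : (L i : ℝ) / 2 * ‖α k • d‖ ^ 2 ≤ Lmax / 2 * α k ^ 2 := by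
      have h6a : (L i : ℝ) / 2 * ‖α k • d‖ ^ 2 ≤ (L i : ℝ) / 2 * α k ^ 2 :=
        mul_le_mul_of_nonneg_left h3 (by positivity)
      have h6b : (L i : ℝ) / 2 * α k ^ 2 ≤ Lmax / 2 * α k ^ 2 :=
        mul_le_mul_of_nonneg_right (by linarith [hLi i]) (sq_nonneg _)
      linarith
    rw [h2] at h1
    have h7 : α k * ⟪gradient (f i) (x k), d⟫ ≤ α k *
        Finset.univ.sup' Finset.univ_nonempty (fun i => ⟪gradient (f i) (x k), d⟫) :=
      mul_le_mul_of_nonneg_left h5 (hαpos k).le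
    linarith
  have hmuDb : ∀ k, ¬ Succ k → muD f (D k) (hDne k) (x k) ≤ (Lmax + c) / 2 * α k := by
    intro k hk
    obtain ⟨hfail, -, -, -⟩ := hUns k hk
    obtain ⟨d0, hd0, hinf⟩ := Finset.exists_mem_eq_inf' (hDne k)
      (fun d => Finset.univ.sup' Finset.univ_nonempty (fun i => ⟪gradient (f i) (x k), d⟫))
    have h1 := hfail d0 hd0
    have h2 := hdesc k d0 hd0
    set G := Finset.univ.sup' Finset.univ_nonempty (fun i => ⟪gradient (f i) (x k), d0⟫) with hG
    have hmd : muD f (D k) (hDne k) (x k) = -G := by rw [muD, hinf]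
    rw [hmd]
    have h3 : α k * (-G) ≤ α k * ((Lmax + c) / 2 * α k) := by
      have hexp : α k * ((Lmax + c) / 2 * α k) = Lmax / 2 * α k ^ 2 + c / 2 * α k ^ 2 := by ring
      have hexp2 : α k * (-G) = -(α k * G) := by ring
      rw [hexp, hexp2]
      linarith [h1, h2]
    exact le_of_mul_le_mul_left h3 (hαpos k)
  have hmuvs : ∀ k, mu f (x k) ≤ (C₁ + 1) * muD f (D k) (hDne k) (x k) := by
    intro k
    have h1 := hC k
    have h2 := neg_abs_le (muD f (D k) (hDne k) (x k) - mu f (x k))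
    linarith
  have hLc : (0:ℝ) < Lmax + c := by linarith
  have hC1p : (0:ℝ) < C₁ + 1 := by linarith
  set L' : ℝ := 2 * ε / ((C₁ + 1) * (Lmax + c)) with hL'def
  have hL'pos : 0 < L' := by positivity
  have hαU : ∀ k, k < kε → ¬ Succ k → L' ≤ α k := by
    intro k hklt hks
    have hx1 : x (k+1) = x k := (hUns k hks).2.1
    have h1 : ε < mu f (x k) := by
      have := hprev k hklt
      rwa [hx1] at this
    have h2 := hmuvs k
    have h3 := hmuDb k hks
    have h4 : (C₁ + 1) * muD f (D k) (hDne k) (x k) ≤ (C₁ + 1) * ((Lmax + c) / 2 * α k) :=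
      mul_le_mul_of_nonneg_left h3 hC1p.le
    have h5 : ε < (C₁ + 1) * ((Lmax + c) / 2 * α k) := lt_of_lt_of_le (h1.trans_le h2) h4
    rw [hL'def, div_le_iff₀ (by positivity)]
    linarith [h5]
  set αmin : ℝ := min (α 0) (β₁ * L') with hαmindef
  have hαminpos : 0 < αmin := lt_min hα0 (mul_pos hβ₁ hL'pos)
  have hαlow : ∀ k, k ≤ kε → αmin ≤ α k := by
    intro k
    induction k with
    | zero => exact fun _ => min_le_left _ _
    | succ k ih =>
      intro hk
      have hk1 : k ≤ kε := Nat.le_of_succ_le hk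
      have hklt : k < kε := hk
      by_cases hs : Succ k
      · exact le_trans (ih hk1) (hSα k hs).1
      · have h1 : L' ≤ α k := hαU k hklt hs
        have h2 : β₁ * α k ≤ α (k+1) := (hUns k hs).2.2.1
        calc αmin ≤ β₁ * L' := min_le_right _ _
          _ ≤ β₁ * α k := mul_le_mul_of_nonneg_left h1 hβ₁.le
          _ ≤ α (k+1) := h2
  -- counting
  set Sset := (Finset.range kε).filter Succ with hSsetdef
  set Uset := (Finset.range kε).filter (fun k => ¬ Succ k) with hUsetdef
  have hSSeq : SS kε = ∑ k ∈ Sset, α k ^ 2 := (Finset.sum_filter _ _).symm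
  have hUSeq : US kε = ∑ k ∈ Uset, α k ^ 2 := by
    rw [hUsetdef, Finset.sum_filter]
    apply Finset.sum_congr rfl
    intro k _
    by_cases h : Succ k <;> simp [h]
  have hcard : (Sset.card : ℝ) + (Uset.card : ℝ) = (kε : ℝ) := by
    have := Finset.card_filter_add_card_filter_not (s := Finset.range kε) (p := Succ)
    rw [Finset.card_range] at this
    exact_mod_cast this
  have hScount : (Sset.card : ℝ) * αmin ^ 2 ≤ SS kε := by
    rw [hSSeq]
    calc (Sset.card : ℝ) * αmin ^ 2 = ∑ _k ∈ Sset, αmin ^ 2 := by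
          rw [Finset.sum_const, nsmul_eq_mul]
      _ ≤ ∑ k ∈ Sset, α k ^ 2 := by
          apply Finset.sum_le_sum
          intro k hk
          have hkr : k < kε := Finset.mem_range.mp (Finset.mem_filter.mp hk).1
          exact pow_le_pow_left₀ hαminpos.le (hαlow k hkr.le) 2
  have hUcount : (Uset.card : ℝ) * L' ^ 2 ≤ US kε := by
    rw [hUSeq]
    calc (Uset.card : ℝ) * L' ^ 2 = ∑ _k ∈ Uset, L' ^ 2 := by
          rw [Finset.sum_const, nsmul_eq_mul]
      _ ≤ ∑ k ∈ Uset, α k ^ 2 := by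
          apply Finset.sum_le_sum
          intro k hk
          obtain ⟨hkr, hkn⟩ := Finset.mem_filter.mp hk
          exact pow_le_pow_left₀ hL'pos.le (hαU k (Finset.mem_range.mp hkr) hkn) 2
  -- bounds on sums
  set A : ℝ := 2 / c * (fmax f (x 0) - Fmin) with hAdef
  have hA0 : 0 ≤ A := by
    have := hbound 0
    have : (0:ℝ) ≤ fmax f (x 0) - Fmin := by linarith
    positivity
  have hSSle : SS kε ≤ A := by
    have h1 := hI1 kε
    have h2 := hbound kε
    have h3 : c / 2 * SS kε ≤ fmax f (x 0) - Fmin := by linarith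
    have h4 : 2 / c * (c / 2 * SS kε) ≤ 2 / c * (fmax f (x 0) - Fmin) :=
      mul_le_mul_of_nonneg_left h3 (by positivity)
    have h5 : 2 / c * (c / 2 * SS kε) = SS kε := by field_simp
    rw [hAdef]
    linarith [h4, h5]
  set W : ℝ := γ ^ 2 / (1 - β₂ ^ 2) * (γ⁻¹ ^ 2 * α 0 ^ 2 + A) with hWdef
  have hβ₂sq : (0:ℝ) < 1 - β₂ ^ 2 := by nlinarith [hβ₁.trans_le hβ₁₂]
  have hγ0 : (0:ℝ) < γ := lt_of_lt_of_le one_pos hγ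
  have hWeq : W * (1 - β₂ ^ 2) = α 0 ^ 2 + γ ^ 2 * A := by
    rw [hWdef]
    field_simp
  have hUSle : US kε ≤ W := by
    have h1 := hI2 kε
    have h2 : (1 - β₂ ^ 2) * US kε ≤ α 0 ^ 2 + (γ ^ 2 - 1) * SS kε := by
      linarith [sq_nonneg (α kε)]
    have h3 : (γ ^ 2 - 1) * SS kε ≤ (γ ^ 2 - 1) * A :=
      mul_le_mul_of_nonneg_left hSSle hγ21
    have h4 : (1 - β₂ ^ 2) * US kε ≤ (1 - β₂ ^ 2) * W := by linarith [hWeq, h2, h3, hA0]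
    exact le_of_mul_le_mul_left h4 hβ₂sq
  have hW0 : 0 ≤ W := by
    have hUS0 : 0 ≤ US kε := by
      rw [hUSeq]; apply Finset.sum_nonneg; intro k _; positivity
    linarith
  -- final arithmetic
  have hcS : (Sset.card : ℝ) ≤ A / αmin ^ 2 := by
    rw [le_div_iff₀ (by positivity)]
    exact hScount.trans hSSle
  have hcU : (Uset.card : ℝ) ≤ W / L' ^ 2 := by
    rw [le_div_iff₀ (by positivity)]
    exact hUcount.trans hUSle
  have hT2eq : W * (Lmax + c) ^ 2 * (C₁ + 1) ^ 2 / (4 * β₁ ^ 2) / ε ^ 2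
      = W / (β₁ ^ 2 * L' ^ 2) := by
    rw [hL'def]
    field_simp
    ring
  have hT1eq : 2 / (c * α 0 ^ 2) * (fmax f (x 0) - Fmin) = A / α 0 ^ 2 := by
    rw [hAdef]; field_simp
  have key : (kε : ℝ) ≤ A / α 0 ^ 2 + W / (β₁ ^ 2 * L' ^ 2) := by
    rw [← hcard]
    by_cases hcase : α 0 ≤ β₁ * L'
    · have hmin : αmin = α 0 := min_eq_left hcase
      have h1 : (Sset.card : ℝ) ≤ A / α 0 ^ 2 := by rwa [hmin] at hcS
      have h2 : W / L' ^ 2 ≤ W / (β₁ ^ 2 * L' ^ 2) := by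
        apply div_le_div_of_nonneg_left hW0 (by positivity)
        calc β₁ ^ 2 * L' ^ 2 ≤ 1 * L' ^ 2 :=
              mul_le_mul_of_nonneg_right hβ₁sq1 (sq_nonneg L')
          _ = L' ^ 2 := one_mul _
      linarith [hcU.trans h2]
    · have hmin : αmin = β₁ * L' := min_eq_right (le_of_not_ge hcase)
      have h1 : (Sset.card : ℝ) ≤ A / (β₁ ^ 2 * L' ^ 2) := by
        rw [hmin] at hcS
        rwa [mul_pow] at hcS
      have hAW : A ≤ W * (1 - β₁ ^ 2) := by
        have hb : 1 - β₂ ^ 2 ≤ 1 - β₁ ^ 2 := by linarith [hββ]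
        have w1 : W * (1 - β₂ ^ 2) ≤ W * (1 - β₁ ^ 2) := mul_le_mul_of_nonneg_left hb hW0
        have w2 : (0:ℝ) ≤ (γ ^ 2 - 1) * A := mul_nonneg hγ21 hA0
        linarith [hWeq, sq_nonneg (α 0), w1, w2]
      have h2 : A / (β₁ ^ 2 * L' ^ 2) + W / L' ^ 2 ≤ W / (β₁ ^ 2 * L' ^ 2) := by
        have hQ : (0:ℝ) < L' ^ 2 := by positivity
        have hP : (0:ℝ) < β₁ ^ 2 * L' ^ 2 := by positivity
        have hWQ : W / L' ^ 2 = W * β₁ ^ 2 / (β₁ ^ 2 * L' ^ 2) := by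
          field_simp
        rw [hWQ, ← add_div, div_le_div_iff₀ hP hP]
        exact mul_le_mul_of_nonneg_right (by linarith [hAW]) hP.le
      have h3 : (0:ℝ) ≤ A / α 0 ^ 2 := by positivity
      linarith [hcU]
  rw [hT2eq, hT1eq]
  exact key
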